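/- Let θ(z) = −(z⁸ + 14z⁴ + 1)³/(108 z⁴ (z⁴ − 1)⁴), let F(z) = (−z⁵ + 5z)/(5z⁴ − 1), and let A(z) = z²(z³ − 240z² + 19200z − 512000)/(625z⁴ + 16000z³ + 153600z² + 655360z + 1048576). Then θ ∘ F = A ∘ θ as rational functions, i.e., θ(F(z)) = A(θ(z)) for all z ∈ ℂ where both sides are defined. -/

import Mathlib

set_option maxHeartbeats 16000000 in
set_option maxRecDepth 8000 in
/-- `θ ∘ F = A ∘ θ` for `θ(z) = −(z⁸ + 14z⁴ + 1)³/(108 z⁴ (z⁴ − 1)⁴)`,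
`F(z) = (−z⁵ + 5z)/(5z⁴ − 1)` and
`A(z) = z²(z³ − 240z² + 19200z − 512000)/(625z⁴ + 16000z³ + 153600z² + 655360z + 1048576)`:
the identity `θ(F(z)) = A(θ(z))` holds for every `z ∈ ℂ` where both sides are defined. -/
theorem stmt11 (z w u : ℂ)
    (hF : 5 * z ^ 4 - 1 ≠ 0)
    (hw : w = (-z ^ 5 + 5 * z) / (5 * z ^ 4 - 1))
    (hθw : w ^ 4 * (w ^ 4 - 1) ≠ 0)
    (hθz : z ^ 4 * (z ^ 4 - 1) ≠ 0)
    (hu : u = -(z ^ 8 + 14 * z ^ 4 + 1) ^ 3 / (108 * z ^ 4 * (z ^ 4 - 1) ^ 4))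
    (hAu : 625 * u ^ 4 + 16000 * u ^ 3 + 153600 * u ^ 2 + 655360 * u + 1048576 ≠ 0) :
    -(w ^ 8 + 14 * w ^ 4 + 1) ^ 3 / (108 * w ^ 4 * (w ^ 4 - 1) ^ 4) =
      u ^ 2 * (u ^ 3 - 240 * u ^ 2 + 19200 * u - 512000) /
        (625 * u ^ 4 + 16000 * u ^ 3 + 153600 * u ^ 2 + 655360 * u + 1048576) := by
  obtain ⟨ha, hb⟩ := mul_ne_zero_iff.1 hθz
  have hD : (108 : ℂ) * z ^ 4 * (z ^ 4 - 1) ^ 4 ≠ 0 :=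
    mul_ne_zero (mul_ne_zero (by norm_num) ha) (pow_ne_zero 4 hb)
  -- step 1: LHS as explicit rational function of z
  have h1 : (108 : ℂ) * w ^ 4 * (w ^ 4 - 1) ^ 4 ≠ 0 := by
    obtain ⟨a, b⟩ := mul_ne_zero_iff.1 hθw
    exact mul_ne_zero (mul_ne_zero (by norm_num) a) (pow_ne_zero 4 b)
  have h2 : ((5 : ℂ) * z ^ 4 - 1) ^ 4 * (108 * (-z ^ 5 + 5 * z) ^ 4 *
      ((-z ^ 5 + 5 * z) ^ 4 - (5 * z ^ 4 - 1) ^ 4) ^ 4) ≠ 0 := by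
    obtain ⟨a, b⟩ := mul_ne_zero_iff.1 hθw
    have hP : (-z ^ 5 + 5 * z) ≠ 0 := by
      intro h; apply a; rw [hw, h, zero_div]; norm_num
    have hS : (-z ^ 5 + 5 * z) ^ 4 - (5 * z ^ 4 - 1) ^ 4 ≠ 0 := by
      intro h; apply b
      rw [hw, div_pow, div_sub_one (pow_ne_zero 4 hF), h, zero_div]
    exact mul_ne_zero (pow_ne_zero 4 hF)
      (mul_ne_zero (mul_ne_zero (by norm_num) (pow_ne_zero 4 hP)) (pow_ne_zero 4 hS))
  have key1 : -(w ^ 8 + 14 * w ^ 4 + 1) ^ 3 / (108 * w ^ 4 * (w ^ 4 - 1) ^ 4)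
      = -((-z ^ 5 + 5 * z) ^ 8 + 14 * (-z ^ 5 + 5 * z) ^ 4 * (5 * z ^ 4 - 1) ^ 4
          + (5 * z ^ 4 - 1) ^ 8) ^ 3 /
        ((5 * z ^ 4 - 1) ^ 4 * (108 * (-z ^ 5 + 5 * z) ^ 4 *
          ((-z ^ 5 + 5 * z) ^ 4 - (5 * z ^ 4 - 1) ^ 4) ^ 4)) := by
    rw [div_eq_div_iff h1 h2]
    have hwQ : -z ^ 5 + 5 * z = w * (5 * z ^ 4 - 1) := by rw [hw, div_mul_cancel₀ _ hF]
    rw [hwQ]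
    ring
  -- step 2: RHS as explicit rational function of z
  set d : ℂ := 108 * z ^ 4 * (z ^ 4 - 1) ^ 4 with hd
  have hU : u * d = -(z ^ 8 + 14 * z ^ 4 + 1) ^ 3 := by
    rw [hu, div_mul_cancel₀ _ hD]
  have hden' : (625 * (u * d) ^ 4 + 16000 * (u * d) ^ 3 * d + 153600 * (u * d) ^ 2 * d ^ 2
      + 655360 * (u * d) * d ^ 3 + 1048576 * d ^ 4) * d ≠ 0 := by
    have e : (625 * (u * d) ^ 4 + 16000 * (u * d) ^ 3 * d + 153600 * (u * d) ^ 2 * d ^ 2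
        + 655360 * (u * d) * d ^ 3 + 1048576 * d ^ 4) * d
        = d ^ 4 * (625 * u ^ 4 + 16000 * u ^ 3 + 153600 * u ^ 2 + 655360 * u + 1048576) * d := by
      ring
    rw [e]
    exact mul_ne_zero (mul_ne_zero (pow_ne_zero 4 hD) hAu) hD
  have key2 : u ^ 2 * (u ^ 3 - 240 * u ^ 2 + 19200 * u - 512000) /
        (625 * u ^ 4 + 16000 * u ^ 3 + 153600 * u ^ 2 + 655360 * u + 1048576)
      = (u * d) ^ 2 * ((u * d) ^ 3 - 240 * (u * d) ^ 2 * d + 19200 * (u * d) * d ^ 2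
          - 512000 * d ^ 3) /
        ((625 * (u * d) ^ 4 + 16000 * (u * d) ^ 3 * d + 153600 * (u * d) ^ 2 * d ^ 2
          + 655360 * (u * d) * d ^ 3 + 1048576 * d ^ 4) * d) := by
    rw [div_eq_div_iff hAu hden']
    ring
  rw [key1, key2, hU]
  congr 1
  · ring
  · ring
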